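/- Let p, q be strictly positive probability mass functions on a finite set X and L(p,q) = ∑_x [ -p(x) log( q(x)/(p(x)+q(x)) ) - q(x) log( p(x)/(p(x)+q(x)) ) ]. Then L(p,q) = log 4 if and only if p(x) = q(x) for all x. -/
import Mathlib


open Finset

lemma stmt6_aux (a b : ℝ) (ha : 0 < a) (hb : 0 < b) :
    (a - b) ^ 2 / (a + b) ≤
      (-a * Real.log (b / (a + b)) - b * Real.log (a / (a + b))) - (a + b) * Real.log 2 := by
  have hs : 0 < a + b := by linarith
  have h1 : Real.log (2 * b / (a + b)) ≤ 2 * b / (a + b) - 1 :=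
    Real.log_le_sub_one_of_pos (by positivity)
  have h2 : Real.log (2 * a / (a + b)) ≤ 2 * a / (a + b) - 1 :=
    Real.log_le_sub_one_of_pos (by positivity)
  rw [Real.log_div (by positivity) hs.ne', Real.log_mul two_ne_zero hb.ne'] at h1
  rw [Real.log_div (by positivity) hs.ne', Real.log_mul two_ne_zero ha.ne'] at h2
  rw [Real.log_div hb.ne' hs.ne', Real.log_div ha.ne' hs.ne']
  have e : (a - b) ^ 2 / (a + b) = a * (1 - 2 * b / (a + b)) + b * (1 - 2 * a / (a + b)) := by
    field_simp; ring
  rw [e]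
  nlinarith [mul_le_mul_of_nonneg_left h1 ha.le, mul_le_mul_of_nonneg_left h2 hb.le]

lemma stmt6_aux_strict (a b : ℝ) (ha : 0 < a) (hb : 0 < b) (hab : a ≠ b) :
    0 < (-a * Real.log (b / (a + b)) - b * Real.log (a / (a + b))) - (a + b) * Real.log 2 := by
  have hs : 0 < a + b := by linarith
  have hx : 2 * b / (a + b) ≠ 1 := by
    intro h
    have : 2 * b = a + b := by field_simp at h; linarith
    exact hab (by linarith)
  have h1 : Real.log (2 * b / (a + b)) < 2 * b / (a + b) - 1 :=
    Real.log_lt_sub_one_of_pos (by positivity) hx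
  have h2 : Real.log (2 * a / (a + b)) ≤ 2 * a / (a + b) - 1 :=
    Real.log_le_sub_one_of_pos (by positivity)
  rw [Real.log_div (by positivity) hs.ne', Real.log_mul two_ne_zero hb.ne'] at h1
  rw [Real.log_div (by positivity) hs.ne', Real.log_mul two_ne_zero ha.ne'] at h2
  rw [Real.log_div hb.ne' hs.ne', Real.log_div ha.ne' hs.ne']
  have e : (0:ℝ) < a * (1 - 2 * b / (a + b)) + b * (1 - 2 * a / (a + b)) := by
    have : a * (1 - 2 * b / (a + b)) + b * (1 - 2 * a / (a + b)) = (a - b) ^ 2 / (a + b) := by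
      field_simp; ring
    rw [this]
    have : a - b ≠ 0 := sub_ne_zero.mpr hab
    positivity
  nlinarith [mul_lt_mul_of_pos_left h1 ha, mul_le_mul_of_nonneg_left h2 hb.le]

/-- The symmetrized confusion loss equals `log 4` iff the two strictly positive
probability mass functions coincide. -/
theorem stmt_6 (X : Type*) [Fintype X] [Nonempty X]
    (p q : X → ℝ) (hp : ∀ x, 0 < p x) (hq : ∀ x, 0 < q x)
    (hps : ∑ x, p x = 1) (hqs : ∑ x, q x = 1) :
    (∑ x, (-p x * Real.log (q x / (p x + q x)) - q x * Real.log (p x / (p x + q x))))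
      = Real.log 4 ↔ ∀ x, p x = q x := by
  set g : X → ℝ := fun x =>
    (-p x * Real.log (q x / (p x + q x)) - q x * Real.log (p x / (p x + q x)))
      - (p x + q x) * Real.log 2 with hg
  have hlog4 : Real.log 4 = 2 * Real.log 2 := by
    rw [show (4:ℝ) = 2 ^ 2 by norm_num, Real.log_pow]; push_cast; ring
  have hsum : ∑ x, g x
      = (∑ x, (-p x * Real.log (q x / (p x + q x)) - q x * Real.log (p x / (p x + q x))))
        - Real.log 4 := by
    rw [hg, Finset.sum_sub_distrib, ← Finset.sum_mul, Finset.sum_add_distrib, hps, hqs, hlog4]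
    ring
  have hnonneg : ∀ x ∈ Finset.univ, 0 ≤ g x := by
    intro x _
    have h1 := hp x
    have h2 := hq x
    exact le_trans (by positivity) (stmt6_aux (p x) (q x) (hp x) (hq x))
  constructor
  · intro hL x
    have hz : ∑ x, g x = 0 := by rw [hsum, hL]; ring
    have := (Finset.sum_eq_zero_iff_of_nonneg hnonneg).mp hz x (Finset.mem_univ x)
    by_contra hne
    exact (stmt6_aux_strict (p x) (q x) (hp x) (hq x) hne).ne' this
  · intro h
    have hz : ∀ x, g x = 0 := by
      intro x
      have hpx := hp x
      have e1 : q x / (p x + q x) = 1 / 2 := by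
        rw [← h x]; field_simp; ring
      have e2 : p x / (p x + q x) = 1 / 2 := by
        rw [← h x]; field_simp; ring
      rw [hg]
      simp only [e1, e2]
      rw [show (1:ℝ)/2 = 2⁻¹ by norm_num, Real.log_inv]
      ring
    have : ∑ x, g x = 0 := Finset.sum_eq_zero fun x _ => hz x
    rw [hsum] at this
    linarith
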